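/- arXiv:1303.6461 — 3 statements merged into one kernel-verified Lean document; each statement's English description precedes it below -/
import Mathlib

section
/- Let V : ℝⁿ → ℝ be C², let C > 0, and suppose ‖Hess V(x)‖ ≤ C·|∇V(x)| for all x on the line segment from p to q, where |q - p| = ρ. Then V(q) ≤ V(p) + |∇V(p)|·(e^{Cρ} − 1)/C. -/
open Set Real

lemma fderiv_apply_eq_inner_gradient {n : ℕ} (V : EuclideanSpace ℝ (Fin n) → ℝ)
    (x y : EuclideanSpace ℝ (Fin n)) :
    fderiv ℝ V x y = inner ℝ (gradient V x) y := by
  rw [gradient]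
  rw [← InnerProductSpace.toDual_apply_apply,
    (InnerProductSpace.toDual ℝ (EuclideanSpace ℝ (Fin n))).apply_symm_apply]

/-- If `‖Hess V‖ ≤ C·|∇V|` along the segment from `p` to `q`, with `|q - p| = ρ`, then
`V(q) ≤ V(p) + |∇V(p)|·(e^{Cρ} − 1)/C`. -/
theorem potential_growth_along_segment (n : ℕ) (V : EuclideanSpace ℝ (Fin n) → ℝ)
    (hV : ContDiff ℝ 2 V) (C : ℝ) (hC : 0 < C)
    (p q : EuclideanSpace ℝ (Fin n)) (ρ : ℝ) (hρ : ‖q - p‖ = ρ)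
    (hHess : ∀ x ∈ segment ℝ p q, ‖fderiv ℝ (gradient V) x‖ ≤ C * ‖gradient V x‖) :
    V q ≤ V p + ‖gradient V p‖ * (Real.exp (C * ρ) - 1) / C := by
  have hρ0 : 0 ≤ ρ := hρ ▸ norm_nonneg _
  set w : EuclideanSpace ℝ (Fin n) := q - p with hw
  set γ : ℝ → EuclideanSpace ℝ (Fin n) := fun t => p + t • w with hγdef
  have hγ0 : γ 0 = p := by simp [hγdef]
  have hγ1 : γ 1 = q := by simp [hγdef, hw]
  have hγseg : ∀ t ∈ Icc (0:ℝ) 1, γ t ∈ segment ℝ p q := by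
    intro t ht
    rw [segment_eq_image']
    exact ⟨t, ht, rfl⟩
  have hγderiv : ∀ t : ℝ, HasDerivAt γ w t := fun t => by
    exact (((hasDerivAt_id t).smul_const w).const_add p).congr_deriv (one_smul ℝ w)
  -- gradient is C¹
  have hG : ContDiff ℝ 1 (gradient V) := by
    have h1 : ContDiff ℝ 1 (fderiv ℝ V) := hV.fderiv_right (le_refl _)
    exact ((InnerProductSpace.toDual ℝ (EuclideanSpace ℝ (Fin n))).symm.contDiff.comp h1 : _)
  set G : ℝ → EuclideanSpace ℝ (Fin n) := fun t => gradient V (γ t) with hGdef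
  have hGderiv : ∀ t : ℝ, HasDerivAt G (fderiv ℝ (gradient V) (γ t) w) t := fun t => by
    exact ((hG.differentiable one_ne_zero (γ t)).hasFDerivAt).comp_hasDerivAt t (hγderiv t)
  set δ := ‖gradient V p‖ with hδ
  -- Gronwall: ‖G t‖ ≤ δ * exp (C * ρ * t) on [0,1]
  have hGbound : ∀ t ∈ Icc (0:ℝ) 1, ‖G t‖ ≤ δ * Real.exp (C * ρ * t) := by
    intro t ht
    have := norm_le_gronwallBound_of_norm_deriv_right_le
      (f := G) (f' := fun t => fderiv ℝ (gradient V) (γ t) w)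
      (δ := δ) (K := C * ρ) (ε := 0) (a := 0) (b := 1)
      (fun s _ => ((hGderiv s).continuousAt).continuousWithinAt)
      (fun s _ => (hGderiv s).hasDerivWithinAt)
      (by simp [hGdef, hγ0, hδ])
      (fun s hs => by
        have hnorm : ‖fderiv ℝ (gradient V) (γ s) w‖ ≤ ‖fderiv ℝ (gradient V) (γ s)‖ * ‖w‖ :=
          (fderiv ℝ (gradient V) (γ s)).le_opNorm w
        have hH := hHess (γ s) (hγseg s ⟨hs.1, hs.2.le⟩)
        have hw' : ‖w‖ = ρ := hρ
        calc ‖fderiv ℝ (gradient V) (γ s) w‖ ≤ ‖fderiv ℝ (gradient V) (γ s)‖ * ρ := by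
              rw [← hw']; exact hnorm
          _ ≤ (C * ‖gradient V (γ s)‖) * ρ :=
              mul_le_mul_of_nonneg_right hH hρ0
          _ = C * ρ * ‖G s‖ + 0 := by ring)
      t ht
    rw [gronwallBound_ε0, sub_zero] at this
    exact this
  -- fencing: V ∘ γ ≤ B where B t = V p + δ * (exp (C*ρ*t) - 1)/C
  set f : ℝ → ℝ := fun t => V (γ t) with hf
  set B : ℝ → ℝ := fun t => V p + δ * (Real.exp (C * ρ * t) - 1) / C with hB
  have hfderiv : ∀ t : ℝ, HasDerivAt f (inner ℝ (G t) w : ℝ) t := fun t => by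
    have h1 : HasDerivAt f (fderiv ℝ V (γ t) w) t :=
      ((hV.differentiable (by norm_num) (γ t)).hasFDerivAt).comp_hasDerivAt t (hγderiv t)
    rwa [fderiv_apply_eq_inner_gradient] at h1
  have hBderiv : ∀ t : ℝ, HasDerivAt B (δ * ρ * Real.exp (C * ρ * t)) t := fun t => by
    have h1 : HasDerivAt (fun t : ℝ => C * ρ * t) (C * ρ) t := by
      simpa using (hasDerivAt_id t).const_mul (C * ρ)
    have h2 : HasDerivAt (fun t : ℝ => Real.exp (C * ρ * t)) (Real.exp (C * ρ * t) * (C * ρ)) t :=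
      (Real.hasDerivAt_exp _).comp t h1
    have h3 : HasDerivAt B (δ * (Real.exp (C * ρ * t) * (C * ρ)) / C) t := by
      exact (((h2.sub_const 1).const_mul δ).div_const C).const_add (V p)
    convert h3 using 1
    field_simp
  have key : ∀ x ∈ Icc (0:ℝ) 1, f x ≤ B x := by
    have ha : f 0 ≤ B 0 := by simp [hf, hB, hγ0]
    have bound : ∀ s ∈ Ico (0:ℝ) 1, (inner ℝ (G s) w : ℝ) ≤ δ * ρ * Real.exp (C * ρ * s) := by
      intro s hs
      have h1 : (inner ℝ (G s) w : ℝ) ≤ ‖G s‖ * ‖w‖ := real_inner_le_norm _ _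
      have h2 : ‖G s‖ ≤ δ * Real.exp (C * ρ * s) := hGbound s ⟨hs.1, hs.2.le⟩
      have hw' : ‖w‖ = ρ := hρ
      calc (inner ℝ (G s) w : ℝ) ≤ ‖G s‖ * ρ := by rw [← hw']; exact h1
        _ ≤ (δ * Real.exp (C * ρ * s)) * ρ :=
            mul_le_mul_of_nonneg_right h2 hρ0
        _ = δ * ρ * Real.exp (C * ρ * s) := by ring
    exact fun x hx => image_le_of_deriv_right_le_deriv_boundary
      (fun s _ => ((hfderiv s).continuousAt).continuousWithinAt)
      (fun s hs => (hfderiv s).hasDerivWithinAt) ha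
      (fun s _ => ((hBderiv s).continuousAt).continuousWithinAt)
      (fun s hs => (hBderiv s).hasDerivWithinAt) bound hx
  have := key 1 ⟨zero_le_one, le_refl 1⟩
  simpa [hf, hB, hγ1] using this
end

section
/- Let V : ℝⁿ → ℝ be C² and suppose there are constants C₁, C₂ > 0 and ν > 0 with ν·C₂ < C₁/√(1+C₁²), such that |∇V(x)| > C₁ and ‖Hess V(x)‖ < C₂·|∇V(x)| for all x in the set S = {x : −ν√(1+|∇V(x)|²) < V(x) < 0}. Then f(x) = V(x)/√(1+|∇V(x)|²) has no critical points in S; in fact |∇f(x)| ≥ C₁/√(1+C₁²) − νC₂ > 0 on S. -/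
open RealInnerProductSpace

private lemma mono_aux {a b : ℝ} (ha : 0 ≤ a) (hab : a ≤ b) :
    a / Real.sqrt (1 + a ^ 2) ≤ b / Real.sqrt (1 + b ^ 2) := by
  have hb : 0 ≤ b := ha.trans hab
  have h1 : (0:ℝ) < Real.sqrt (1 + a ^ 2) := Real.sqrt_pos.2 (by positivity)
  have h2 : (0:ℝ) < Real.sqrt (1 + b ^ 2) := Real.sqrt_pos.2 (by positivity)
  rw [div_le_div_iff₀ h1 h2]
  have e1 : a * Real.sqrt (1 + b ^ 2) = Real.sqrt (a ^ 2 * (1 + b ^ 2)) := by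
    rw [Real.sqrt_mul (by positivity), Real.sqrt_sq ha]
  have e2 : b * Real.sqrt (1 + a ^ 2) = Real.sqrt (b ^ 2 * (1 + a ^ 2)) := by
    rw [Real.sqrt_mul (by positivity), Real.sqrt_sq hb]
  rw [e1, e2]
  exact Real.sqrt_le_sqrt (by nlinarith)

set_option maxHeartbeats 1000000 in
/-- If `|∇V| > C₁` and `‖Hess V‖ < C₂|∇V|` on `S = {x : −ν√(1+|∇V|²) < V < 0}` with
`ν·C₂ < C₁/√(1+C₁²)`, then `f = V/√(1+|∇V|²)` has no critical points in `S`; in fact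
`|∇f| ≥ C₁/√(1+C₁²) − νC₂ > 0` on `S`. -/
theorem no_critical_points_in_strip (n : ℕ) (V : EuclideanSpace ℝ (Fin n) → ℝ)
    (hV : ContDiff ℝ 2 V) (C₁ C₂ ν : ℝ) (hC₁ : 0 < C₁) (hC₂ : 0 < C₂) (hν : 0 < ν)
    (hsmall : ν * C₂ < C₁ / Real.sqrt (1 + C₁ ^ 2))
    (S : Set (EuclideanSpace ℝ (Fin n)))
    (hS : S = {x | -ν * Real.sqrt (1 + ‖gradient V x‖ ^ 2) < V x ∧ V x < 0})
    (hgrad : ∀ x ∈ S, C₁ < ‖gradient V x‖)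
    (hHess : ∀ x ∈ S, ‖fderiv ℝ (gradient V) x‖ < C₂ * ‖gradient V x‖)
    (f : EuclideanSpace ℝ (Fin n) → ℝ)
    (hf : ∀ x, f x = V x / Real.sqrt (1 + ‖gradient V x‖ ^ 2)) :
    ∀ x ∈ S,
      ‖gradient f x‖ ≥ C₁ / Real.sqrt (1 + C₁ ^ 2) - ν * C₂ ∧
      gradient f x ≠ 0 := by
  have hpos : 0 < C₁ / Real.sqrt (1 + C₁ ^ 2) - ν * C₂ := sub_pos.2 hsmall
  have hVdiff : Differentiable ℝ V := hV.differentiable (by norm_num)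
  have hGc : ContDiff ℝ 1 (gradient V) := by
    have h1 : ContDiff ℝ 1 (fderiv ℝ V) := hV.fderiv_right (by norm_num)
    exact (InnerProductSpace.toDual ℝ _).symm.contDiff.comp h1
  intro x hxS
  have hr : C₁ < ‖gradient V x‖ := hgrad x hxS
  have hH0 : ‖fderiv ℝ (gradient V) x‖ < C₂ * ‖gradient V x‖ := hHess x hxS
  set gx := gradient V x with hgxdef
  set r := ‖gx‖ with hrdef
  have hrpos : 0 < r := hC₁.trans hr
  set w := Real.sqrt (1 + r ^ 2) with hwdef
  have hwpos : 0 < w := Real.sqrt_pos.2 (by positivity)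
  have hw2 : w ^ 2 = 1 + r ^ 2 := Real.sq_sqrt (by positivity)
  have hx' : x ∈ {x | -ν * Real.sqrt (1 + ‖gradient V x‖ ^ 2) < V x ∧ V x < 0} := hS ▸ hxS
  obtain ⟨hx1, hx2⟩ := hx'
  have hvabs : |V x| < ν * w := by
    rw [abs_of_neg hx2, hwdef]
    have : -ν * Real.sqrt (1 + r ^ 2) < V x := hx1
    linarith
  set G' := fderiv ℝ (gradient V) x with hG'def
  have hGd : HasFDerivAt (gradient V) G' x := ((hGc.differentiable one_ne_zero) x).hasFDerivAt
  have hinner : HasFDerivAt (fun y => ⟪gradient V y, gradient V y⟫)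
      ((fderivInnerCLM ℝ (gx, gx)).comp (G'.prod G')) x := hGd.inner ℝ hGd
  set qD := (fderivInnerCLM ℝ (gx, gx)).comp (G'.prod G') with hqDdef
  have hq : HasFDerivAt (fun y => 1 + ‖gradient V y‖ ^ 2) qD x := by
    simpa only [← real_inner_self_eq_norm_sq] using hinner.const_add 1
  have hW : HasFDerivAt (fun y => Real.sqrt (1 + ‖gradient V y‖ ^ 2))
      ((1 / (2 * w)) • qD) x := by
    simpa [hwdef, hrdef, hgxdef] using hq.sqrt (by positivity)
  have hVfd : HasFDerivAt V ((InnerProductSpace.toDual ℝ _) gx) x :=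
    (hVdiff x).hasGradientAt.hasFDerivAt
  have hfeq : f = fun y => V y / Real.sqrt (1 + ‖gradient V y‖ ^ 2) := funext hf
  have hwne : Real.sqrt (1 + ‖gradient V x‖ ^ 2) ≠ 0 := by
    rw [← hgxdef, ← hrdef, ← hwdef]; exact ne_of_gt hwpos
  have hinv : HasFDerivAt (fun y => (Real.sqrt (1 + ‖gradient V y‖ ^ 2))⁻¹)
      ((-(w ^ 2)⁻¹) • ((1 / (2 * w)) • qD)) x := by
    have h2 : HasDerivAt (fun y : ℝ => y⁻¹) (-(w ^ 2)⁻¹)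
        (Real.sqrt (1 + ‖gradient V x‖ ^ 2)) := by
      have : Real.sqrt (1 + ‖gradient V x‖ ^ 2) = w := rfl
      rw [this]
      exact hasDerivAt_inv (ne_of_gt hwpos)
    exact h2.comp_hasFDerivAt x hW
  set fD := V x • ((-(w ^ 2)⁻¹) • ((1 / (2 * w)) • qD))
      + w⁻¹ • ((InnerProductSpace.toDual ℝ (EuclideanSpace ℝ (Fin n))) gx) with hfDdef
  have hfd : HasFDerivAt f fD x := by
    rw [hfeq]
    simp only [div_eq_mul_inv]
    exact hVfd.mul hinv
  have hgradf : gradient f x = (InnerProductSpace.toDual ℝ _).symm fD := by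
    unfold gradient
    rw [hfd.fderiv]
  have hnormf : ‖gradient f x‖ = ‖fD‖ := by
    rw [hgradf]; exact LinearIsometryEquiv.norm_map _ _
  -- evaluate at unit vector
  set u := r⁻¹ • gx with hudef
  have hu1 : ‖u‖ = 1 := by
    rw [hudef, norm_smul, norm_inv, Real.norm_eq_abs, abs_of_pos hrpos, ← hrdef,
      inv_mul_cancel₀ (ne_of_gt hrpos)]
  have hA : (InnerProductSpace.toDual ℝ (EuclideanSpace ℝ (Fin n))) gx u = r := by
    rw [InnerProductSpace.toDual_apply_apply, hudef, real_inner_smul_right,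
      real_inner_self_eq_norm_sq, ← hrdef, pow_two, ← mul_assoc,
      inv_mul_cancel₀ (ne_of_gt hrpos), one_mul]
  have hqDu : qD u = ⟪gx, G' u⟫ + ⟪G' u, gx⟫ := by
    rw [hqDdef]
    simp [fderivInnerCLM_apply]
  have hGu : ‖G' u‖ ≤ ‖G'‖ := by
    have h := G'.le_opNorm u
    rw [hu1, mul_one] at h
    exact h
  have hs : |⟪gx, G' u⟫ + ⟪G' u, gx⟫| ≤ 2 * (r * ‖G'‖) := by
    have h1 : |⟪gx, G' u⟫| ≤ r * ‖G'‖ := by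
      refine (abs_real_inner_le_norm _ _).trans ?_
      rw [← hrdef]; exact mul_le_mul_of_nonneg_left hGu (le_of_lt hrpos)
    have h2 : |⟪G' u, gx⟫| ≤ r * ‖G'‖ := by
      refine (abs_real_inner_le_norm _ _).trans ?_
      rw [← hrdef, mul_comm]; exact mul_le_mul_of_nonneg_left hGu (le_of_lt hrpos)
    calc |⟪gx, G' u⟫ + ⟪G' u, gx⟫| ≤ |⟪gx, G' u⟫| + |⟪G' u, gx⟫| := abs_add_le _ _
      _ ≤ 2 * (r * ‖G'‖) := by linarith
  set s := ⟪gx, G' u⟫ + ⟪G' u, gx⟫ with hsdef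
  have hfDu : fD u = (1 / w) * r - V x / w ^ 2 * (1 / (2 * w) * s) := by
    rw [hfDdef]
    simp only [ContinuousLinearMap.add_apply, ContinuousLinearMap.smul_apply,
      smul_eq_mul, hA, hqDu, ← hsdef]
    field_simp
    try ring
  -- main estimate
  have t1 : C₁ / Real.sqrt (1 + C₁ ^ 2) ≤ 1 / w * r := by
    calc C₁ / Real.sqrt (1 + C₁ ^ 2) ≤ r / Real.sqrt (1 + r ^ 2) :=
          mono_aux (le_of_lt hC₁) (le_of_lt hr)
      _ = 1 / w * r := by rw [hwdef]; ring
  have hT : V x / w ^ 2 * (1 / (2 * w) * s) ≤ ν * C₂ := by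
    have habs : |V x / w ^ 2 * (1 / (2 * w) * s)| ≤
        (ν * w) / w ^ 2 * (1 / (2 * w) * (2 * (r * (C₂ * r)))) := by
      rw [abs_mul, abs_mul, abs_div, abs_of_pos (pow_pos hwpos 2),
        abs_of_pos (by positivity : (0:ℝ) < 1 / (2 * w))]
      have hG'le : ‖G'‖ ≤ C₂ * r := le_of_lt hH0
      have hs' : |s| ≤ 2 * (r * (C₂ * r)) :=
        hs.trans (by nlinarith [norm_nonneg G'])
      gcongr
      all_goals exact le_of_lt hvabs
    have heq : (ν * w) / w ^ 2 * (1 / (2 * w) * (2 * (r * (C₂ * r)))) =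
        ν * C₂ * (r ^ 2 / w ^ 2) := by
      field_simp
      try ring
    have hle1 : r ^ 2 / w ^ 2 ≤ 1 := by
      rw [div_le_one (by positivity), hw2]; linarith
    calc V x / w ^ 2 * (1 / (2 * w) * s) ≤ |V x / w ^ 2 * (1 / (2 * w) * s)| := le_abs_self _
      _ ≤ ν * C₂ * (r ^ 2 / w ^ 2) := by rw [← heq]; exact habs
      _ ≤ ν * C₂ * 1 := mul_le_mul_of_nonneg_left hle1 (by positivity)
      _ = ν * C₂ := mul_one _
  have hlow : C₁ / Real.sqrt (1 + C₁ ^ 2) - ν * C₂ ≤ fD u := by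
    rw [hfDu]; linarith
  have hfinal : C₁ / Real.sqrt (1 + C₁ ^ 2) - ν * C₂ ≤ ‖gradient f x‖ := by
    rw [hnormf]
    refine hlow.trans ((le_abs_self _).trans ?_)
    have h := ContinuousLinearMap.le_opNorm fD u
    rw [hu1, mul_one] at h
    exact h
  refine ⟨hfinal, ?_⟩
  intro h0
  rw [h0, norm_zero] at hfinal
  linarith
end

section
/- Let V : ℝⁿ → ℝ be C² and suppose there is C > 0 with 3‖Hess V(q)‖/(1+|∇V(q)|²) ≤ C for all q. Let f(q,θ) = −⟨θ, ∇V(q)⟩/(1+|∇V(q)|²) and Θ = Λ + κ·df the perturbed Liouville form with 0 < κ ≤ 1/(2C), where Λ is the Liouville form on T*ℝⁿ. Then for every (q,θ) ∈ T*ℝⁿ, Θ(X_H)(q,θ) ≥ (1/2)|θ|² + κ·|∇V(q)|²/(1+|∇V(q)|²). -/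
open scoped RealInnerProductSpace

lemma key_ineq (C κ h nθ nG b x y z : ℝ)
    (hb : b = 1 + nG ^ 2) (hκ0 : 0 < κ) (hκC : κ * C ≤ 1 / 2)
    (hh : 0 ≤ h) (hnθ : 0 ≤ nθ) (hnG : 0 ≤ nG)
    (hCb : 3 * h ≤ C * b)
    (hx : |x| ≤ h * nθ ^ 2) (hy : |y| ≤ nθ * nG) (hz : |z| ≤ h * nθ * nG) :
    nθ ^ 2 + κ * ((-y) * ((-(b ^ 2)⁻¹) * (z + z)) + b⁻¹ * (-(x + -(nG ^ 2)))) ≥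
      (1 / 2) * nθ ^ 2 + κ * nG ^ 2 / b := by
  have hbpos : 0 < b := by rw [hb]; positivity
  have hb2 : (0:ℝ) < b ^ 2 := by positivity
  have hGb : nG ^ 2 ≤ b := by rw [hb]; linarith
  have e1 : (-y) * ((-(b ^ 2)⁻¹) * (z + z)) + b⁻¹ * (-(x + -(nG ^ 2))) =
      2 * y * z / b ^ 2 + (nG ^ 2 - x) / b := by ring
  rw [e1]
  have hyz : |y * z| ≤ (nθ * nG) * (h * nθ * nG) := by
    rw [abs_mul]; exact mul_le_mul hy hz (abs_nonneg _) (by positivity)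
  have t1 : 2 * y * z / b ^ 2 ≥ -(2 * (h * nθ ^ 2 * nG ^ 2) / b ^ 2) := by
    rw [ge_iff_le, ← neg_div]
    gcongr
    nlinarith [neg_abs_le (y * z)]
  have t2 : 2 * (h * nθ ^ 2 * nG ^ 2) / b ^ 2 ≤ 2 * h * nθ ^ 2 / b := by
    rw [div_le_div_iff₀ hb2 hbpos]
    nlinarith [sq_nonneg nθ, mul_nonneg (mul_nonneg hh (sq_nonneg nθ)) hbpos.le]
  have t3 : (nG ^ 2 - x) / b ≥ nG ^ 2 / b - h * nθ ^ 2 / b := by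
    rw [ge_iff_le, div_sub_div_same]
    gcongr
    linarith [le_abs_self x]
  have t4 : 2 * h * nθ ^ 2 / b + h * nθ ^ 2 / b ≤ C * nθ ^ 2 := by
    rw [← add_div, div_le_iff₀ hbpos]
    nlinarith [sq_nonneg nθ]
  have hD : 2 * y * z / b ^ 2 + (nG ^ 2 - x) / b ≥ nG ^ 2 / b - C * nθ ^ 2 := by linarith
  have h5 := mul_le_mul_of_nonneg_left hD hκ0.le
  have h6 : κ * (nG ^ 2 / b - C * nθ ^ 2) = κ * nG ^ 2 / b - (κ * C) * nθ ^ 2 := by ring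
  have h7 : (κ * C) * nθ ^ 2 ≤ (1 / 2) * nθ ^ 2 :=
    mul_le_mul_of_nonneg_right hκC (sq_nonneg nθ)
  rw [h6] at h5
  linarith

/-- Uniform contact-type estimate: if `3‖Hess V(q)‖/(1+|∇V(q)|²) ≤ C` for all `q`, and
`0 < κ ≤ 1/(2C)`, then the perturbed Liouville form `Θ = Λ + κ df` evaluated on the
Hamiltonian vector field `X_H = (θ, −∇V(q))` satisfies
`Θ(X_H)(q,θ) = |θ|² + κ·X_H(f)(q,θ) ≥ (1/2)|θ|² + κ·|∇V(q)|²/(1+|∇V(q)|²)`. -/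
theorem contact_form_lower_bound (n : ℕ) (V : EuclideanSpace ℝ (Fin n) → ℝ)
    (hV : ContDiff ℝ 2 V) (C : ℝ) (hC : 0 < C)
    (hHess : ∀ q, 3 * ‖fderiv ℝ (gradient V) q‖ / (1 + ‖gradient V q‖ ^ 2) ≤ C)
    (κ : ℝ) (hκ0 : 0 < κ) (hκ : κ ≤ 1 / (2 * C))
    (f : EuclideanSpace ℝ (Fin n) × EuclideanSpace ℝ (Fin n) → ℝ)
    (hf : ∀ p : EuclideanSpace ℝ (Fin n) × EuclideanSpace ℝ (Fin n),
      f p = -⟪p.2, gradient V p.1⟫ / (1 + ‖gradient V p.1‖ ^ 2)) :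
    ∀ q θ : EuclideanSpace ℝ (Fin n),
      ‖θ‖ ^ 2 + κ * fderiv ℝ f (q, θ) (θ, -(gradient V q)) ≥
        (1 / 2) * ‖θ‖ ^ 2 + κ * ‖gradient V q‖ ^ 2 / (1 + ‖gradient V q‖ ^ 2) := by
  intro q θ
  have hg : Differentiable ℝ (gradient V) := by
    have h1 : Differentiable ℝ
        (⇑(InnerProductSpace.toDual ℝ (EuclideanSpace ℝ (Fin n))).symm ∘ fderiv ℝ V) :=
      ((InnerProductSpace.toDual ℝ _).symm.contDiff.comp
        (hV.fderiv_right (m := 1) (by norm_num))).differentiable one_ne_zero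
    exact h1
  set g := gradient V with hg_def
  set G := g q with hG
  set H := fderiv ℝ g q with hH
  have hb0 : (0:ℝ) < 1 + ‖G‖ ^ 2 := by positivity
  have hbne : (1 + ⟪G, G⟫) ≠ 0 := by rw [real_inner_self_eq_norm_sq]; linarith
  have hgq : HasFDerivAt (fun p : EuclideanSpace ℝ (Fin n) × EuclideanSpace ℝ (Fin n) => g p.1)
      (H.comp (ContinuousLinearMap.fst ℝ _ _)) (q, θ) :=
    ((hg q).hasFDerivAt).comp (f := Prod.fst) (g := g) _ (hasFDerivAt_fst)
  have hA : HasFDerivAt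
      (fun p : EuclideanSpace ℝ (Fin n) × EuclideanSpace ℝ (Fin n) => -⟪p.2, g p.1⟫)
      (-((fderivInnerCLM ℝ (θ, G)).comp
        ((ContinuousLinearMap.snd ℝ _ _).prod (H.comp (ContinuousLinearMap.fst ℝ _ _))))) (q, θ) :=
    ((hasFDerivAt_snd).inner ℝ hgq).neg
  have hB : HasFDerivAt (fun x : EuclideanSpace ℝ (Fin n) => (1:ℝ) + ⟪g x, g x⟫)
      ((fderivInnerCLM ℝ (G, G)).comp (H.prod H)) q :=
    (((hg q).hasFDerivAt).inner ℝ ((hg q).hasFDerivAt)).const_add 1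
  have hinv : HasFDerivAt (fun x : EuclideanSpace ℝ (Fin n) => ((1:ℝ) + ⟪g x, g x⟫)⁻¹)
      ((-(((1:ℝ) + ⟪G, G⟫) ^ 2)⁻¹) • ((fderivInnerCLM ℝ (G, G)).comp (H.prod H))) q :=
    (hasDerivAt_inv hbne).comp_hasFDerivAt q hB
  have hinvp : HasFDerivAt
      (fun p : EuclideanSpace ℝ (Fin n) × EuclideanSpace ℝ (Fin n) =>
        ((1:ℝ) + ⟪g p.1, g p.1⟫)⁻¹)
      (((-(((1:ℝ) + ⟪G, G⟫) ^ 2)⁻¹) • ((fderivInnerCLM ℝ (G, G)).comp (H.prod H))).comp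
        (ContinuousLinearMap.fst ℝ _ _)) (q, θ) :=
    hinv.comp (f := Prod.fst) (g := fun x : EuclideanSpace ℝ (Fin n) => ((1:ℝ) + ⟪g x, g x⟫)⁻¹) _ hasFDerivAt_fst
  have hF : HasFDerivAt (fun p : EuclideanSpace ℝ (Fin n) × EuclideanSpace ℝ (Fin n) =>
      (-⟪p.2, g p.1⟫) * ((1:ℝ) + ⟪g p.1, g p.1⟫)⁻¹) _ (q, θ) := hA.mul hinvp
  have hfeq : f = fun p : EuclideanSpace ℝ (Fin n) × EuclideanSpace ℝ (Fin n) =>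
      (-⟪p.2, g p.1⟫) * ((1:ℝ) + ⟪g p.1, g p.1⟫)⁻¹ := by
    funext p
    rw [hf p, div_eq_mul_inv, real_inner_self_eq_norm_sq]
  rw [hfeq]
  have hval : fderiv ℝ (fun p : EuclideanSpace ℝ (Fin n) × EuclideanSpace ℝ (Fin n) =>
      (-⟪p.2, g p.1⟫) * ((1:ℝ) + ⟪g p.1, g p.1⟫)⁻¹) (q, θ) (θ, -G) =
      (-⟪θ, G⟫) * ((-(((1:ℝ) + ⟪G, G⟫) ^ 2)⁻¹) * (⟪G, H θ⟫ + ⟪H θ, G⟫)) +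
      ((1:ℝ) + ⟪G, G⟫)⁻¹ * (-(⟪θ, H θ⟫ + ⟪-G, G⟫)) := by
    rw [hF.fderiv]
    simp only [ContinuousLinearMap.add_apply, ContinuousLinearMap.smul_apply,
      ContinuousLinearMap.comp_apply, ContinuousLinearMap.neg_apply,
      ContinuousLinearMap.prod_apply, ContinuousLinearMap.coe_fst',
      ContinuousLinearMap.coe_snd', fderivInnerCLM_apply, smul_eq_mul]
    rfl
  rw [hval]
  have hHnorm : ∀ x : EuclideanSpace ℝ (Fin n), ‖H x‖ ≤ ‖H‖ * ‖x‖ := fun x => H.le_opNorm x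
  have hCb : 3 * ‖H‖ ≤ C * (1 + ‖G‖ ^ 2) := by
    have := hHess q
    rw [div_le_iff₀ hb0] at this
    linarith
  have hκC : κ * C ≤ 1 / 2 := by
    rw [le_div_iff₀ (by positivity : (0:ℝ) < 2 * C)] at hκ
    nlinarith
  have h1 : |⟪θ, H θ⟫| ≤ ‖H‖ * ‖θ‖ ^ 2 := by
    calc |⟪θ, H θ⟫| ≤ ‖θ‖ * ‖H θ‖ := abs_real_inner_le_norm θ (H θ)
      _ ≤ ‖θ‖ * (‖H‖ * ‖θ‖) := mul_le_mul_of_nonneg_left (hHnorm θ) (norm_nonneg θ)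
      _ = ‖H‖ * ‖θ‖ ^ 2 := by ring
  have h2 : |⟪θ, G⟫| ≤ ‖θ‖ * ‖G‖ := abs_real_inner_le_norm θ G
  have h3 : |⟪H θ, G⟫| ≤ ‖H‖ * ‖θ‖ * ‖G‖ := by
    calc |⟪H θ, G⟫| ≤ ‖H θ‖ * ‖G‖ := abs_real_inner_le_norm _ _
      _ ≤ ‖H‖ * ‖θ‖ * ‖G‖ := mul_le_mul_of_nonneg_right (hHnorm θ) (norm_nonneg G)
  have h4 : ⟪G, H θ⟫ = ⟪H θ, G⟫ := real_inner_comm _ _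
  have h5 : ⟪-G, G⟫ = -(‖G‖ ^ 2) := by rw [inner_neg_left, real_inner_self_eq_norm_sq]
  have h6 : ⟪G, G⟫ = ‖G‖ ^ 2 := real_inner_self_eq_norm_sq G
  rw [h4, h5, h6]
  exact key_ineq C κ ‖H‖ ‖θ‖ ‖G‖ (1 + ‖G‖ ^ 2) ⟪θ, H θ⟫ ⟪θ, G⟫ ⟪H θ, G⟫ rfl hκ0 hκC
    (norm_nonneg _) (norm_nonneg _) (norm_nonneg _) hCb h1 h2 h3
end
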